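/- Let a ∈ (−2,0), set b = −a, let ε₁ ∈ ℝ and ε₂ = −2ε₁, and assume ε₂² < 4b(2−b). Set α₁ = √(4b(2−b) − ε₂²), r₁(x,y) = 2by + (2−b) + ε₂x, and define H₁(x,y) = y^a·(r₁(x,y)² + α₁²x²)·exp(−(2ε₂/α₁)·arctan(α₁x/r₁(x,y))) on the open set D = {(x,y) ∈ ℝ² : y > 0 and r₁(x,y) > 0}. Then H₁ is a first integral on D of the quadratic system ẋ = (b−2)/4 + ε₁x + (1−b)y + ax² + ε₂xy + by², ẏ = −2xy; that is, for all (x,y) ∈ D, ∂ₓH₁(x,y)·((b−2)/4 + ε₁x + (1−b)y + ax² + ε₂xy + by²) + ∂_yH₁(x,y)·(−2xy) = 0. -/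

import Mathlib

lemma keyx_stmt7 (ya Ex A R e2 b x : ℝ) (hA : A ≠ 0) (hR : R ≠ 0)
    (h2 : A ^ 2 = 4 * b * (2 - b) - e2 ^ 2) :
    ya * (2 * R * e2 + A ^ 2 * (2 * x)) * Ex +
      ya * (R ^ 2 + A ^ 2 * x ^ 2) *
        (Ex * (-(2 * e2 / A) * (1 / (1 + (A * x / R) ^ 2) *
          ((A * 1 * R - A * x * e2) / R ^ 2)))) =
    ya * Ex * (8 * b * (2 - b) * x) := by
  have h1 : (0:ℝ) < 1 + (A * x / R) ^ 2 := by positivity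
  field_simp
  linear_combination (2*ya*Ex*x) * h2

lemma keyy_stmt7 (ya ya1 Ex A R e2 b a x y : ℝ) (hA : A ≠ 0) (hR : R ≠ 0)
    (h2 : A ^ 2 = 4 * b * (2 - b) - e2 ^ 2) (hya : ya = ya1 * y) :
    (a * ya1 * (R ^ 2 + A ^ 2 * x ^ 2) + ya * (2 * R * (2 * b))) * Ex +
      ya * (R ^ 2 + A ^ 2 * x ^ 2) *
        (Ex * (-(2 * e2 / A) * (1 / (1 + (A * x / R) ^ 2) *
          ((0 * R - A * x * (2 * b)) / R ^ 2)))) =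
    ya1 * Ex * (a * (R ^ 2 + (4 * b * (2 - b) - e2 ^ 2) * x ^ 2) + 4 * b * y * (R + e2 * x)) := by
  have h1 : (0:ℝ) < 1 + (A * x / R) ^ 2 := by positivity
  subst hya
  field_simp
  linear_combination (ya1*Ex*A*a*x^2) * h2

/-- for `a ∈ (−2,0)`, `b = −a`, `ε₂ = −2ε₁` with `ε₂² < 4b(2−b)`, the
function `H₁(x,y) = y^a·(r₁(x,y)² + α₁²x²)·exp(−(2ε₂/α₁)·arctan(α₁x/r₁(x,y)))`, where
`α₁ = √(4b(2−b) − ε₂²)` and `r₁(x,y) = 2by + (2−b) + ε₂x`, is a first integral on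
`D = {y > 0, r₁ > 0}` of the quadratic system
`ẋ = (b−2)/4 + ε₁x + (1−b)y + ax² + ε₂xy + by²`, `ẏ = −2xy`. -/
theorem stmt_7 (a e1 : ℝ) (ha1 : -2 < a) (ha2 : a < 0) :
    let b : ℝ := -a
    let e2 : ℝ := -2 * e1
    e2 ^ 2 < 4 * b * (2 - b) →
    let α : ℝ := Real.sqrt (4 * b * (2 - b) - e2 ^ 2)
    let r : ℝ → ℝ → ℝ := fun x y => 2 * b * y + (2 - b) + e2 * x
    let H : ℝ → ℝ → ℝ := fun x y =>
      y ^ a * ((r x y) ^ 2 + α ^ 2 * x ^ 2) *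
        Real.exp (-(2 * e2 / α) * Real.arctan (α * x / r x y))
    ∀ x y : ℝ, 0 < y → 0 < r x y →
      deriv (fun t => H t y) x *
          ((b - 2) / 4 + e1 * x + (1 - b) * y + a * x ^ 2 + e2 * (x * y) + b * y ^ 2) +
        deriv (fun t => H x t) y * (-2 * x * y) = 0 := by
  intro b e2 he α r H x y hy hr
  have hb : b = -a := rfl
  have he2 : e2 = -2 * e1 := rfl
  have hpos : (0:ℝ) < 4 * b * (2 - b) - e2 ^ 2 := by nlinarith [sq_nonneg e2]
  have hα : 0 < α := Real.sqrt_pos.mpr hpos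
  have hα2 : α ^ 2 = 4 * b * (2 - b) - e2 ^ 2 := Real.sq_sqrt hpos.le
  have hR : r x y = 2 * b * y + (2 - b) + e2 * x := rfl
  have hr0 : (0:ℝ) < 2 * b * y + (2 - b) + e2 * x := hr
  have hya : y ^ a = y ^ (a - 1) * y := by
    rw [← Real.rpow_add_one hy.ne' (a - 1)]; norm_num
  set R : ℝ := 2 * b * y + (2 - b) + e2 * x with hRdef
  set Ex : ℝ := Real.exp (-(2 * e2 / α) * Real.arctan (α * x / R)) with hEx
  -- x-derivative
  have hrt : HasDerivAt (fun t => 2 * b * y + (2 - b) + e2 * t) e2 x := by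
    simpa using ((hasDerivAt_id x).const_mul e2).const_add (2 * b * y + (2 - b))
  have hu : HasDerivAt (fun t => α * t / (2 * b * y + (2 - b) + e2 * t))
      ((α * 1 * R - α * x * e2) / R ^ 2) x :=
    ((hasDerivAt_id x).const_mul α).div hrt hr0.ne'
  have hE : HasDerivAt
      (fun t => Real.exp (-(2 * e2 / α) *
        Real.arctan (α * t / (2 * b * y + (2 - b) + e2 * t))))
      (Ex * (-(2 * e2 / α) * (1 / (1 + (α * x / R) ^ 2) *
        ((α * 1 * R - α * x * e2) / R ^ 2)))) x :=
    (hu.arctan.const_mul (-(2 * e2 / α))).exp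
  have hQ : HasDerivAt
      (fun t => (2 * b * y + (2 - b) + e2 * t) ^ 2 + α ^ 2 * t ^ 2)
      (2 * R * e2 + α ^ 2 * (2 * x)) x := by
    have h := (hrt.pow 2).add ((hasDerivAt_pow 2 x).const_mul (α ^ 2))
    norm_num at h
    exact h
  have hDx : HasDerivAt (fun t => H t y) (y ^ a * Ex * (8 * b * (2 - b) * x)) x := by
    have hH := (hQ.const_mul (y ^ a)).mul hE
    have hval := keyx_stmt7 (y ^ a) Ex α R e2 b x hα.ne' hr0.ne' hα2
    exact hval ▸ hH
  -- y-derivative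
  have hry : HasDerivAt (fun t => 2 * b * t + (2 - b) + e2 * x) (2 * b) y := by
    simpa using (((hasDerivAt_id y).const_mul (2 * b)).add_const (2 - b)).add_const (e2 * x)
  have hu2 : HasDerivAt (fun t => α * x / (2 * b * t + (2 - b) + e2 * x))
      ((0 * R - α * x * (2 * b)) / R ^ 2) y :=
    (hasDerivAt_const y (α * x)).div hry hr0.ne'
  have hE2 : HasDerivAt
      (fun t => Real.exp (-(2 * e2 / α) *
        Real.arctan (α * x / (2 * b * t + (2 - b) + e2 * x))))
      (Ex * (-(2 * e2 / α) * (1 / (1 + (α * x / R) ^ 2) *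
        ((0 * R - α * x * (2 * b)) / R ^ 2)))) y :=
    (hu2.arctan.const_mul (-(2 * e2 / α))).exp
  have hQ2 : HasDerivAt
      (fun t => (2 * b * t + (2 - b) + e2 * x) ^ 2 + α ^ 2 * x ^ 2)
      (2 * R * (2 * b)) y := by
    have h := (hry.pow 2).add_const (α ^ 2 * x ^ 2)
    exact h.congr_deriv (by rw [hRdef]; norm_num)
  have hrpow : HasDerivAt (fun t : ℝ => t ^ a) (a * y ^ (a - 1)) y :=
    Real.hasDerivAt_rpow_const (Or.inl hy.ne')
  have hDy : HasDerivAt (fun t => H x t)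
      (y ^ (a - 1) * Ex *
        (a * (R ^ 2 + (4 * b * (2 - b) - e2 ^ 2) * x ^ 2) + 4 * b * y * (R + e2 * x))) y := by
    have hH2 := (hrpow.mul hQ2).mul hE2
    have hval := keyy_stmt7 (y ^ a) (y ^ (a - 1)) Ex α R e2 b a x y hα.ne' hr0.ne' hα2 hya
    exact hval ▸ hH2
  rw [hDx.deriv, hDy.deriv, hya, hb, he2]
  ring
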